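/- Let c > 0, ξ > 0, u : [0,c) → [0,c) a bijection, and define L(λ,v) = λ·((c-u(v))/(c+u(v)))^ξ and v ⊕ w = u⁻¹((u(v)+u(w))/(1 + u(v)u(w)/c²)). Then L satisfies the monotonicity axiom [M]: for all λ, λ' > 0 and v, v', w ∈ [0,c), L(λ,v) ≤ L(λ',v') if and only if L(λ, v ⊕ w) ≤ L(λ', v' ⊕ w). -/

import Mathlib

lemma key_aux (c : ℝ) (hc : 0 < c) {a b : ℝ} (ha : a ∈ Set.Ico 0 c)
    (hb : b ∈ Set.Ico 0 c) :
    (a + b) / (1 + a * b / c ^ 2) ∈ Set.Ico 0 c ∧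
    (c - (a + b) / (1 + a * b / c ^ 2)) / (c + (a + b) / (1 + a * b / c ^ 2))
      = (c - a) / (c + a) * ((c - b) / (c + b)) := by
  obtain ⟨ha0, hac⟩ := ha
  obtain ⟨hb0, hbc⟩ := hb
  have hden : 0 < 1 + a * b / c ^ 2 := by positivity
  have hca : 0 < c - a := by linarith
  have hcb : 0 < c - b := by linarith
  have hcpa : 0 < c + a := by linarith
  have hcpb : 0 < c + b := by linarith
  constructor
  · constructor
    · positivity
    · rw [div_lt_iff₀ hden]
      have h : 0 < (c - a) * (c - b) / c := by positivity
      have : c * (1 + a * b / c ^ 2) - (a + b) = (c - a) * (c - b) / c := by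
        field_simp; ring
      linarith
  · have h1 : c + (a + b) / (1 + a * b / c ^ 2) ≠ 0 := by positivity
    have h2 : (1:ℝ) + a * b / c ^ 2 ≠ 0 := ne_of_gt hden
    have h3 : c + a ≠ 0 := ne_of_gt hcpa
    have h4 : c + b ≠ 0 := ne_of_gt hcpb
    field_simp
    ring

theorem stmt_11 (c : ℝ) (hc : 0 < c) (ξ : ℝ) (hξ : 0 < ξ)
    (u uinv : ℝ → ℝ)
    (humaps : ∀ v ∈ Set.Ico 0 c, u v ∈ Set.Ico 0 c)
    (huinvmaps : ∀ t ∈ Set.Ico 0 c, uinv t ∈ Set.Ico 0 c)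
    (hleft : ∀ v ∈ Set.Ico 0 c, uinv (u v) = v)
    (hright : ∀ t ∈ Set.Ico 0 c, u (uinv t) = t)
    (L : ℝ → ℝ → ℝ) (op : ℝ → ℝ → ℝ)
    (hL : ∀ l : ℝ, 0 < l → ∀ v ∈ Set.Ico 0 c, L l v = l * ((c - u v) / (c + u v)) ^ ξ)
    (hop : ∀ v ∈ Set.Ico 0 c, ∀ w ∈ Set.Ico 0 c,
      op v w = uinv ((u v + u w) / (1 + u v * u w / c ^ 2))) :
    ∀ l l' : ℝ, 0 < l → 0 < l' →
      ∀ v ∈ Set.Ico 0 c, ∀ v' ∈ Set.Ico 0 c, ∀ w ∈ Set.Ico 0 c,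
        (L l v ≤ L l' v' ↔ L l (op v w) ≤ L l' (op v' w)) := by
  intro l l' hl hl' v hv v' hv' w hw
  have huv := humaps v hv
  have huv' := humaps v' hv'
  have huw := humaps w hw
  -- L of op
  have main : ∀ x ∈ Set.Ico 0 c, ∀ m : ℝ, 0 < m →
      L m (op x w) = (m * ((c - u x) / (c + u x)) ^ ξ) * ((c - u w) / (c + u w)) ^ ξ := by
    intro x hx m hm
    have hux := humaps x hx
    obtain ⟨hsmem, hseq⟩ := key_aux c hc hux huw
    have hopmem : op x w ∈ Set.Ico 0 c := by
      rw [hop x hx w hw]; exact huinvmaps _ hsmem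
    have hx1 : 0 ≤ (c - u x) / (c + u x) :=
      div_nonneg (by linarith [hux.2]) (by linarith [hux.1])
    have hw1 : 0 ≤ (c - u w) / (c + u w) :=
      div_nonneg (by linarith [huw.2]) (by linarith [huw.1])
    rw [hL m hm _ hopmem, hop x hx w hw, hright _ hsmem, hseq,
      Real.mul_rpow hx1 hw1, mul_assoc]
  rw [main v hv l hl, main v' hv' l' hl',
    hL l hl v hv, hL l' hl' v' hv']
  have hpos : 0 < ((c - u w) / (c + u w)) ^ ξ := by
    have h1 : 0 < c - u w := by linarith [huw.2]
    have h2 : 0 < c + u w := by linarith [huw.1]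
    exact Real.rpow_pos_of_pos (by positivity) _
  exact (mul_le_mul_iff_left₀ hpos).symm
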